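/- Proposition 2 (quasi-concavity of the max–min power-allocation problem (P1)): the objective function T ↦ min_{1≤k≤K} SINR_k(T) is quasiconcave on the nonnegative orthant O = {T ∈ ℝ^{K×M} : T_{k,m} ≥ 0 for all k, m}; that is, for every t ∈ ℝ the superlevel set {T ∈ O : t ≤ min_{1≤k≤K} SINR_k(T)} is convex. -/

import Mathlib

/-- Proposition 2: the max–min objective `T ↦ min_k SINR_k(T)` of the power-allocation
problem (P1) is quasiconcave on the nonnegative orthant, i.e. every superlevel set
(intersected with the orthant) is convex. -/
theorem stmt_0 (K M : ℕ) (hK : 0 < K) (hM : 0 < M)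
    (a : Fin K → ℝ) (ha : ∀ k, 0 < a k)
    (u : Fin K → Fin M → ℝ) (hu : ∀ k m, 0 < u k m)
    (w : Fin M → ℝ) (hw : ∀ m, 0 < w m)
    (c : ℝ) (hc : 0 < c)
    (SINR : Fin K → (Fin K → Fin M → ℝ) → ℝ)
    (hSINR : ∀ k T, SINR k T =
      a k * (∑ m, u k m * T k m) ^ 2 / (∑ m, w m * (T k m) ^ 2 + c))
    (t : ℝ) :
    Convex ℝ {T : Fin K → Fin M → ℝ |
      (∀ k m, 0 ≤ T k m) ∧
      t ≤ Finset.univ.inf' ⟨⟨0, hK⟩, Finset.mem_univ _⟩ (fun k => SINR k T)} := by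
  intro x hx y hy θ μ hθ hμ hθμ
  obtain ⟨hx0, hxS⟩ := hx
  obtain ⟨hy0, hyS⟩ := hy
  have hz : ∀ k m, (θ • x + μ • y) k m = θ * x k m + μ * y k m := by
    intro k m; simp [Pi.add_apply, Pi.smul_apply, smul_eq_mul]
  have hz0 : ∀ k m, 0 ≤ (θ • x + μ • y) k m := by
    intro k m; rw [hz]
    exact add_nonneg (mul_nonneg hθ (hx0 k m)) (mul_nonneg hμ (hy0 k m))
  refine ⟨hz0, ?_⟩
  refine Finset.le_inf' _ _ ?_
  intro k _
  rw [hSINR]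
  -- abbreviations
  set L1 : ℝ := ∑ m, u k m * x k m with hL1
  set L2 : ℝ := ∑ m, u k m * y k m with hL2
  set B1 : ℝ := ∑ m, w m * (x k m) ^ 2 with hB1
  set B2 : ℝ := ∑ m, w m * (y k m) ^ 2 with hB2
  have hL1n : 0 ≤ L1 := Finset.sum_nonneg fun m _ => mul_nonneg (hu k m).le (hx0 k m)
  have hL2n : 0 ≤ L2 := Finset.sum_nonneg fun m _ => mul_nonneg (hu k m).le (hy0 k m)
  have hB1n : 0 ≤ B1 := Finset.sum_nonneg fun m _ => mul_nonneg (hw m).le (sq_nonneg _)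
  have hB2n : 0 ≤ B2 := Finset.sum_nonneg fun m _ => mul_nonneg (hw m).le (sq_nonneg _)
  have hD1 : (0:ℝ) < B1 + c := by linarith
  have hD2 : (0:ℝ) < B2 + c := by linarith
  have hDz : (0:ℝ) < ∑ m, w m * ((θ • x + μ • y) k m) ^ 2 + c := by
    have : 0 ≤ ∑ m, w m * ((θ • x + μ • y) k m) ^ 2 :=
      Finset.sum_nonneg fun m _ => mul_nonneg (hw m).le (sq_nonneg _)
    linarith
  rw [le_div_iff₀ hDz]
  -- expand numerator and denominator of the combination
  have hQ : ∑ m, u k m * ((θ • x + μ • y) k m) = θ * L1 + μ * L2 := by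
    rw [hL1, hL2, Finset.mul_sum, Finset.mul_sum, ← Finset.sum_add_distrib]
    refine Finset.sum_congr rfl fun m _ => ?_
    rw [hz]; ring
  set P : ℝ := ∑ m, w m * (x k m * y k m) with hP
  have hPn : 0 ≤ P := Finset.sum_nonneg fun m _ =>
    mul_nonneg (hw m).le (mul_nonneg (hx0 k m) (hy0 k m))
  have hDexp : ∑ m, w m * ((θ • x + μ • y) k m) ^ 2
      = θ^2 * B1 + μ^2 * B2 + 2*θ*μ*P := by
    rw [hB1, hB2, hP, Finset.mul_sum, Finset.mul_sum, Finset.mul_sum,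
      ← Finset.sum_add_distrib, ← Finset.sum_add_distrib]
    refine Finset.sum_congr rfl fun m _ => ?_
    rw [hz]; ring
  rw [hQ, hDexp]
  rcases le_or_gt t 0 with ht | ht
  · have : 0 ≤ a k * (θ * L1 + μ * L2) ^ 2 := mul_nonneg (ha k).le (sq_nonneg _)
    have hDn : 0 ≤ θ^2 * B1 + μ^2 * B2 + 2*θ*μ*P :=
      add_nonneg (add_nonneg (mul_nonneg (sq_nonneg θ) hB1n) (mul_nonneg (sq_nonneg μ) hB2n))
        (mul_nonneg (mul_nonneg (mul_nonneg (by norm_num) hθ) hμ) hPn)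
    nlinarith [mul_nonneg (neg_nonneg.mpr ht) hDn]
  -- now t > 0
  have h1 : t * (B1 + c) ≤ a k * L1 ^ 2 := by
    have := Finset.le_inf'_iff (f := fun k => SINR k x)
      (H := (⟨⟨0, hK⟩, Finset.mem_univ _⟩ : Finset.univ.Nonempty)) (a := t) |>.mp hxS k
      (Finset.mem_univ k)
    rw [hSINR, le_div_iff₀ hD1] at this
    linarith
  have h2 : t * (B2 + c) ≤ a k * L2 ^ 2 := by
    have := Finset.le_inf'_iff (f := fun k => SINR k y)
      (H := (⟨⟨0, hK⟩, Finset.mem_univ _⟩ : Finset.univ.Nonempty)) (a := t) |>.mp hyS k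
      (Finset.mem_univ k)
    rw [hSINR, le_div_iff₀ hD2] at this
    linarith
  -- Cauchy–Schwarz: P^2 ≤ B1 * B2
  have hCS : P ^ 2 ≤ B1 * B2 := by
    have h := Finset.sum_mul_sq_le_sq_mul_sq Finset.univ
      (fun m => Real.sqrt (w m) * x k m) (fun m => Real.sqrt (w m) * y k m)
    have eP : P = ∑ m, (Real.sqrt (w m) * x k m) * (Real.sqrt (w m) * y k m) := by
      refine Finset.sum_congr rfl fun m _ => ?_
      rw [mul_mul_mul_comm, Real.mul_self_sqrt (hw m).le]
    have eB1 : B1 = ∑ m, (Real.sqrt (w m) * x k m) ^ 2 := by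
      refine Finset.sum_congr rfl fun m _ => ?_
      rw [mul_pow, Real.sq_sqrt (hw m).le]
    have eB2 : B2 = ∑ m, (Real.sqrt (w m) * y k m) ^ 2 := by
      refine Finset.sum_congr rfl fun m _ => ?_
      rw [mul_pow, Real.sq_sqrt (hw m).le]
    rw [eP, eB1, eB2]
    exact h
  have hAM : 2 * P ≤ B1 + B2 := by
    rw [hP, hB1, hB2, Finset.mul_sum, ← Finset.sum_add_distrib]
    refine Finset.sum_le_sum fun m _ => ?_
    nlinarith [mul_nonneg (hw m).le (sq_nonneg (x k m - y k m))]
  have hPc : (P + c) ^ 2 ≤ (B1 + c) * (B2 + c) := by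
    have h2c : (2 * P) * c ≤ (B1 + B2) * c := mul_le_mul_of_nonneg_right hAM hc.le
    have id1 : (P + c) ^ 2 = P ^ 2 + (2 * P) * c + c ^ 2 := by ring
    have id2 : (B1 + c) * (B2 + c) = B1 * B2 + (B1 + B2) * c + c ^ 2 := by ring
    linarith
  have p1 : 0 < t * (B1 + c) := mul_pos ht hD1
  have p2 : 0 < t * (B2 + c) := mul_pos ht hD2
  have hkey2 : (t * (P + c)) ^ 2 ≤ (a k * L1 * L2) ^ 2 := by
    calc (t * (P + c)) ^ 2 = t ^ 2 * ((P + c) ^ 2) := by ring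
      _ ≤ t ^ 2 * ((B1 + c) * (B2 + c)) := mul_le_mul_of_nonneg_left hPc (sq_nonneg t)
      _ = (t * (B1 + c)) * (t * (B2 + c)) := by ring
      _ ≤ (a k * L1 ^ 2) * (a k * L2 ^ 2) :=
          mul_le_mul h1 h2 p2.le (le_trans p1.le h1)
      _ = (a k * L1 * L2) ^ 2 := by ring
  have hkey : t * (P + c) ≤ a k * L1 * L2 := by
    have hl : 0 ≤ t * (P + c) := mul_nonneg ht.le (by linarith)
    have hr : 0 ≤ a k * L1 * L2 := mul_nonneg (mul_nonneg (ha k).le hL1n) hL2n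
    have h := Real.sqrt_le_sqrt hkey2
    rwa [Real.sqrt_sq hl, Real.sqrt_sq hr] at h
  have g1 : θ ^ 2 * (t * (B1 + c)) ≤ θ ^ 2 * (a k * L1 ^ 2) :=
    mul_le_mul_of_nonneg_left h1 (sq_nonneg θ)
  have g2 : μ ^ 2 * (t * (B2 + c)) ≤ μ ^ 2 * (a k * L2 ^ 2) :=
    mul_le_mul_of_nonneg_left h2 (sq_nonneg μ)
  have g3 : (2 * θ * μ) * (t * (P + c)) ≤ (2 * θ * μ) * (a k * L1 * L2) :=
    mul_le_mul_of_nonneg_left hkey (mul_nonneg (mul_nonneg (by norm_num) hθ) hμ)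
  have hμ' : μ = 1 - θ := by linarith
  subst hμ'
  have idL : t * (θ ^ 2 * B1 + (1 - θ) ^ 2 * B2 + 2 * θ * (1 - θ) * P + c)
      = θ ^ 2 * (t * (B1 + c)) + (1 - θ) ^ 2 * (t * (B2 + c))
        + (2 * θ * (1 - θ)) * (t * (P + c)) := by ring
  have idR : a k * (θ * L1 + (1 - θ) * L2) ^ 2
      = θ ^ 2 * (a k * L1 ^ 2) + (1 - θ) ^ 2 * (a k * L2 ^ 2)
        + (2 * θ * (1 - θ)) * (a k * L1 * L2) := by ring
  linarith
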